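/- Consider the zero-mode equations of the (3)-tri-junction (I) with all t_μ, J_μ, h_μ > 0. If exactly one chain satisfies h_μ > J_μ (say μ = 1, with h₂ < J₂ and h₃ < J₃), then the only ℓ²-solution is zero. -/
import Mathlib


/-- Zero-mode equations of the (3)-tri-junction (I) of three semi-infinite
transverse field Ising chains. Here `v μ n` stands for `v_μ(n+1)` and `w μ n`
for `w_μ(n)`, and `U` is `v₁₂₃(0)`; ℓ² (square-summability) is included. -/
def TriJuncSol (t J h : Fin 3 → ℝ) (U : ℝ)
    (v w : Fin 3 → ℕ → ℝ) : Prop :=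
  (∑ μ : Fin 3, t μ * w μ 0 = 0) ∧
  (∀ μ, -(t μ) * U + J μ * v μ 0 = 0) ∧
  (∀ μ n, -(J μ) * w μ n + h μ * w μ (n + 1) = 0) ∧
  (∀ μ n, -(h μ) * v μ n + J μ * v μ (n + 1) = 0) ∧
  (∀ μ, Summable (fun n => (v μ n) ^ 2)) ∧
  (∀ μ, Summable (fun n => (w μ n) ^ 2))

lemma geom_zero_of_summable {r c : ℝ} (hr : 1 < r)
    (hs : Summable (fun n : ℕ => (r ^ n * c) ^ 2)) : c = 0 := by
  by_contra hc
  have h0 := hs.tendsto_atTop_zero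
  have hgrow : Filter.Tendsto (fun n : ℕ => (r ^ n * c) ^ 2) Filter.atTop Filter.atTop := by
    have : (fun n : ℕ => (r ^ n * c) ^ 2) = fun n : ℕ => (r ^ 2) ^ n * c ^ 2 := by
      funext n; ring
    rw [this]
    apply Filter.Tendsto.atTop_mul_const (by positivity)
    exact tendsto_pow_atTop_atTop_of_one_lt (by nlinarith)
  obtain ⟨n, hn⟩ := (hgrow.eventually_ge_atTop 1).and
      (h0.eventually (gt_mem_nhds (show (0:ℝ) < 1 by norm_num))) |>.exists
  linarith [hn.1, hn.2]

/-- If exactly one chain (say `μ = 1`) satisfies `h μ > J μ` while the other two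
satisfy `h μ < J μ`, then the only ℓ²-zero-mode of the (3)-tri-junction (I)
is the zero solution. -/
theorem stmt11 (t J h : Fin 3 → ℝ)
    (ht : ∀ μ, 0 < t μ) (hJ : ∀ μ, 0 < J μ) (hh : ∀ μ, 0 < h μ)
    (h1 : J 0 < h 0) (h2 : h 1 < J 1) (h3 : h 2 < J 2) :
    ∀ U v w, TriJuncSol t J h U v w →
      U = 0 ∧ (∀ μ n, v μ n = 0) ∧ (∀ μ n, w μ n = 0) := by
  intro U v w ⟨hjunc, hU, hwrec, hvrec, hvs, hws⟩
  have hvclosed : ∀ μ n, v μ n = (h μ / J μ) ^ n * v μ 0 := by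
    intro μ n
    induction n with
    | zero => simp
    | succ n ih =>
      have hJne : J μ ≠ 0 := (hJ μ).ne'
      have step : v μ (n+1) = (h μ / J μ) * v μ n := by
        have := hvrec μ n; field_simp; linarith
      rw [step, ih, pow_succ]; ring
  have hwclosed : ∀ μ n, w μ n = (J μ / h μ) ^ n * w μ 0 := by
    intro μ n
    induction n with
    | zero => simp
    | succ n ih =>
      have hhne : h μ ≠ 0 := (hh μ).ne'
      have step : w μ (n+1) = (J μ / h μ) * w μ n := by
        have := hwrec μ n; field_simp; linarith
      rw [step, ih, pow_succ]; ring
  -- v 0 0 = 0 from summability with ratio h0/J0 > 1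
  have hv00 : v 0 0 = 0 := by
    apply geom_zero_of_summable (r := h 0 / J 0)
      ((one_lt_div (hJ 0)).mpr h1)
    exact (hvs 0).congr (fun n => by rw [hvclosed 0 n])
  -- U = 0
  have hU0 : U = 0 := by
    have := hU 0
    rw [hv00] at this
    have := (ht 0).ne'
    nlinarith [ht 0]
  -- all v μ 0 = 0
  have hv0all : ∀ μ, v μ 0 = 0 := by
    intro μ
    have := hU μ
    rw [hU0] at this
    have hJne := (hJ μ).ne'
    nlinarith [hJ μ]
  have hvall : ∀ μ n, v μ n = 0 := fun μ n => by
    rw [hvclosed μ n, hv0all μ, mul_zero]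
  -- w 1 0 = 0 and w 2 0 = 0
  have hw1 : w 1 0 = 0 :=
    geom_zero_of_summable ((one_lt_div (hh 1)).mpr h2)
      ((hws 1).congr (fun n => by rw [hwclosed 1 n]))
  have hw2 : w 2 0 = 0 :=
    geom_zero_of_summable ((one_lt_div (hh 2)).mpr h3)
      ((hws 2).congr (fun n => by rw [hwclosed 2 n]))
  -- junction: t0 w00 = 0
  have hw0 : w 0 0 = 0 := by
    rw [Fin.sum_univ_three, hw1, hw2] at hjunc
    have := (ht 0).ne'
    nlinarith [ht 0]
  have hw0all : ∀ μ, w μ 0 = 0 := by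
    intro μ
    fin_cases μ <;> assumption
  exact ⟨hU0, hvall, fun μ n => by rw [hwclosed μ n, hw0all μ, mul_zero]⟩
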